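/- Let f : ℝ → ℝ be three times differentiable at x₀ with f″(x₀) > 0 and f‴(x₀) ≠ 0, let T(x) be the third-order Taylor polynomial of f at x₀, and let t* = (f‴(x₀))²/(48 f″(x₀)). Then t* is the smallest t ≥ 0 such that ψ(x) = T(x) + t(x − x₀)⁴ is convex on ℝ, and the unique critical point of ψ with t = t* is x₁ = x₀ − 2 f″(x₀)/f‴(x₀) − cbrt( (f′(x₀) − (2/3)(f″(x₀))²/f‴(x₀)) / ((f‴(x₀))²/(12 f″(x₀))) ). -/

import Mathlib

/-- The real cube root of a real number. -/
noncomputable def realCbrt (y : ℝ) : ℝ :=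
  if 0 ≤ y then y ^ ((1:ℝ)/3) else -((-y) ^ ((1:ℝ)/3))

/-- Let `f` be three times differentiable at `x₀` with `f″(x₀) > 0` and `f‴(x₀) ≠ 0`,
let `T` be the third-order Taylor polynomial of `f` at `x₀`, and let
`t* = f‴(x₀)²/(48 f″(x₀))`. Then `t*` is the smallest `t ≥ 0` such that
`ψ_t(x) = T(x) + t(x−x₀)⁴` is convex, and the unique critical point of `ψ_{t*}` is
`x₁ = x₀ − 2f″(x₀)/f‴(x₀) − cbrt((f′(x₀) − (2/3)f″(x₀)²/f‴(x₀)) / (f‴(x₀)²/(12 f″(x₀))))`. -/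
lemma realCbrt_cube (y : ℝ) : (realCbrt y) ^ 3 = y := by
  unfold realCbrt
  split_ifs with h
  · rw [← Real.rpow_natCast (y ^ ((1:ℝ)/3)) 3, ← Real.rpow_mul h]
    norm_num
  · push_neg at h
    have h' : (0:ℝ) ≤ -y := by linarith
    rw [neg_pow, ← Real.rpow_natCast ((-y) ^ ((1:ℝ)/3)) 3, ← Real.rpow_mul h']
    norm_num

lemma hasDerivAt_psi (a b c d t x₀ x : ℝ) :
    HasDerivAt (fun x : ℝ => (a + b*(x-x₀) + (1/2)*c*(x-x₀)^2 + (1/6)*d*(x-x₀)^3) + t*(x-x₀)^4)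
      (b + c*(x-x₀) + (1/2)*d*(x-x₀)^2 + 4*t*(x-x₀)^3) x := by
  have h : HasDerivAt (fun x : ℝ => x - x₀) 1 x := (hasDerivAt_id x).sub_const x₀
  have H := ((((hasDerivAt_const x a).add (h.const_mul b)).add
      ((h.pow 2).const_mul (1/2*c))).add ((h.pow 3).const_mul (1/6*d))).add
      ((h.pow 4).const_mul t)
  exact H.congr_deriv (by norm_num; ring)

lemma hasDerivAt_psi' (b c d t x₀ x : ℝ) :
    HasDerivAt (fun x : ℝ => b + c*(x-x₀) + (1/2)*d*(x-x₀)^2 + 4*t*(x-x₀)^3)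
      (c + d*(x-x₀) + 12*t*(x-x₀)^2) x := by
  have h : HasDerivAt (fun x : ℝ => x - x₀) 1 x := (hasDerivAt_id x).sub_const x₀
  have H := (((hasDerivAt_const x b).add (h.const_mul c)).add
      ((h.pow 2).const_mul (1/2*d))).add ((h.pow 3).const_mul (4*t))
  exact H.congr_deriv (by norm_num; ring)

/-- If ψ_t is convex then its symmetric second difference is nonnegative. -/
lemma convex_second_diff (a b c d t x₀ : ℝ)
    (hcv : ConvexOn ℝ Set.univ (fun x : ℝ =>
      (a + b*(x-x₀) + (1/2)*c*(x-x₀)^2 + (1/6)*d*(x-x₀)^3) + t*(x-x₀)^4))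
    (p h : ℝ) :
    0 ≤ (c + d*(p-x₀) + 12*t*(p-x₀)^2)*h^2 + 2*t*h^4 := by
  have key := hcv.2 (Set.mem_univ (p-h)) (Set.mem_univ (p+h))
    (by norm_num : (0:ℝ) ≤ 1/2) (by norm_num : (0:ℝ) ≤ 1/2) (by norm_num)
  simp only [smul_eq_mul] at key
  nlinarith [key]

theorem stmt9 (f : ℝ → ℝ) (x₀ : ℝ) (hf : ContDiffAt ℝ 3 f x₀)
    (h2 : 0 < iteratedDeriv 2 f x₀) (h3 : iteratedDeriv 3 f x₀ ≠ 0) :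
    IsLeast {t : ℝ | 0 ≤ t ∧ ConvexOn ℝ Set.univ (fun x : ℝ =>
        (f x₀ + deriv f x₀ * (x - x₀) + (1/2) * iteratedDeriv 2 f x₀ * (x - x₀)^2
          + (1/6) * iteratedDeriv 3 f x₀ * (x - x₀)^3) + t * (x - x₀)^4)}
      ((iteratedDeriv 3 f x₀)^2 / (48 * iteratedDeriv 2 f x₀)) ∧
    ∀ x : ℝ,
      deriv (fun x : ℝ =>
        (f x₀ + deriv f x₀ * (x - x₀) + (1/2) * iteratedDeriv 2 f x₀ * (x - x₀)^2
          + (1/6) * iteratedDeriv 3 f x₀ * (x - x₀)^3)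
          + ((iteratedDeriv 3 f x₀)^2 / (48 * iteratedDeriv 2 f x₀)) * (x - x₀)^4) x = 0
      ↔ x = x₀ - 2 * iteratedDeriv 2 f x₀ / iteratedDeriv 3 f x₀ -
          realCbrt ((deriv f x₀ - (2/3) * (iteratedDeriv 2 f x₀)^2 / iteratedDeriv 3 f x₀) /
            ((iteratedDeriv 3 f x₀)^2 / (12 * iteratedDeriv 2 f x₀))) := by
  set a := f x₀ with ha
  set b := deriv f x₀ with hb
  set c := iteratedDeriv 2 f x₀ with hcdef
  set d := iteratedDeriv 3 f x₀ with hddef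
  have hc : 0 < c := h2
  have hc0 : c ≠ 0 := ne_of_gt hc
  set T := d^2 / (48*c) with hT
  constructor
  · constructor
    · -- membership
      refine ⟨by positivity, ?_⟩
      have hdψ : deriv (fun x : ℝ =>
          (a + b * (x - x₀) + 1/2 * c * (x - x₀)^2 + 1/6 * d * (x - x₀)^3) + T * (x - x₀)^4)
          = fun x => b + c*(x-x₀) + (1/2)*d*(x-x₀)^2 + 4*T*(x-x₀)^3 :=
        funext fun x => (hasDerivAt_psi a b c d T x₀ x).deriv
      apply convexOn_of_deriv2_nonneg convex_univ
      · apply Continuous.continuousOn; fun_prop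
      · intro x _
        exact (hasDerivAt_psi a b c d T x₀ x).differentiableAt.differentiableWithinAt
      · rw [hdψ]
        intro x _
        exact (hasDerivAt_psi' b c d T x₀ x).differentiableAt.differentiableWithinAt
      · intro x _
        show 0 ≤ deriv (deriv _) x
        rw [hdψ, (hasDerivAt_psi' b c d T x₀ x).deriv]
        have : c + d*(x-x₀) + 12*T*(x-x₀)^2 = (2*c + d*(x-x₀))^2/(4*c) := by
          rw [hT]; field_simp; ring
        rw [this]; positivity
    · -- lower bound
      rintro t ⟨ht0, hcv⟩
      by_contra hlt
      push_neg at hlt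
      have hgt : t * (48*c) < d^2 := by
        rw [← lt_div_iff₀ (by positivity)]; exact hlt
      have hsd := convex_second_diff a b c d t x₀ hcv
      rcases eq_or_lt_of_le ht0 with h0 | ht
      · have key := hsd (x₀ - 2*c/d) 1
        rw [← h0] at key
        have hpd : d * ((x₀ - 2*c/d) - x₀) = -(2*c) := by field_simp; ring
        nlinarith [key, hpd]
      · -- t > 0 case
        set p := x₀ - d/(24*t) with hp
        have hG : 0 < d^2 - 48*t*c := by nlinarith
        set h := Real.sqrt ((d^2 - 48*t*c)/(192*t^2)) with hh
        have hpos : 0 < h := Real.sqrt_pos.2 (by positivity)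
        have h2eq : h^2 = (d^2 - 48*t*c)/(192*t^2) :=
          Real.sq_sqrt (by positivity)
        have key := hsd p h
        have e1 : c + d*(p-x₀) + 12*t*(p-x₀)^2 = c - d^2/(48*t) := by
          rw [hp]; field_simp; ring
        rw [e1] at key
        have val : (c - d^2/(48*t))*h^2 + 2*t*h^4 = -((d^2 - 48*t*c)/(96*t) * h^2) := by
          have h4 : h^4 = (h^2)^2 := by ring
          rw [h4, h2eq]; field_simp; ring
        rw [val] at key
        have : 0 < (d^2 - 48*t*c)/(96*t) * h^2 :=
          mul_pos (div_pos hG (by positivity)) (pow_pos hpos 2)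
        linarith
  · -- critical point
    intro x
    rw [(hasDerivAt_psi a b c d T x₀ x).deriv]
    set K := (b - 2/3 * c^2 / d) / (d^2 / (12*c)) with hK
    have factored : b + c*(x-x₀) + (1/2)*d*(x-x₀)^2 + 4*T*(x-x₀)^3
        = (d^2/(12*c)) * (((x - x₀) + 2*c/d)^3 + K) := by
      rw [hT, hK]; field_simp; ring
    rw [factored]
    have hcoef : d^2/(12*c) ≠ 0 := by positivity
    have hK3 : (-(realCbrt K))^3 = -K := by
      rw [neg_pow, realCbrt_cube]; norm_num
    constructor
    · intro hx0
      have hw3 : ((x - x₀) + 2*c/d)^3 = (-(realCbrt K))^3 := by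
        rw [hK3]
        rcases mul_eq_zero.1 hx0 with h | h
        · exact absurd h hcoef
        · linarith
      have hw := (Odd.strictMono_pow (R := ℝ) (⟨1, by norm_num⟩ : Odd 3)).injective hw3
      linarith
    · intro hx
      have hw : (x - x₀) + 2*c/d = -(realCbrt K) := by rw [hx]; ring
      rw [hw, hK3]
      ring
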